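/- arXiv:2208.04541 — 3 statements merged into one kernel-verified Lean document; each statement's English description precedes it below -/
import Mathlib

section
/- Let N_c be a positive integer, let τ_1, …, τ_K be integers with τ_a ≢ τ_b (mod N_c) for all a ≠ b, let g_1, …, g_K ∈ ℂ and P_1, …, P_K ≥ 0, and let ḡ ∈ ℂ^K satisfy |ḡ_k|² ≤ |g_k|² P_k for every k. With g̃_n = Σ_{k=1}^K ḡ_k exp(−2πi τ_k n / N_c), the average sub-carrier rate satisfies (1/N_c) Σ_{n=1}^{N_c} log₂(1 + |g̃_n|²) ≤ log₂(1 + Σ_{k=1}^K |g_k|² P_k). -/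
open Finset Complex

private lemma concaveF : ConcaveOn ℝ (Set.Ici 0) (fun x => Real.logb 2 (1 + x)) := by
  refine ⟨convex_Ici 0, fun x hx y hy a b ha hb hab => ?_⟩
  have hx' : (0:ℝ) ≤ x := hx
  have hy' : (0:ℝ) ≤ y := hy
  have h1 : (0:ℝ) < 1 + x := by linarith
  have h2 : (0:ℝ) < 1 + y := by linarith
  have h := strictConcaveOn_log_Ioi.concaveOn.2 (Set.mem_Ioi.mpr h1) (Set.mem_Ioi.mpr h2) ha hb hab
  simp only [smul_eq_mul] at h ⊢
  have heq : a * (1 + x) + b * (1 + y) = 1 + (a * x + b * y) := by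
    have : a + b = 1 := hab; nlinarith
  rw [heq] at h
  have hlog2 : 0 < Real.log 2 := Real.log_pos (by norm_num)
  rw [Real.logb, Real.logb, Real.logb]
  calc a * (Real.log (1+x) / Real.log 2) + b * (Real.log (1+y) / Real.log 2)
      = (a * Real.log (1+x) + b * Real.log (1+y)) / Real.log 2 := by ring
    _ ≤ Real.log (1 + (a*x + b*y)) / Real.log 2 := by gcongr

private lemma char_sum (Nc : ℕ) (hNc : 0 < Nc) (m : ℤ) :
    ∑ n ∈ Finset.Icc 1 Nc, Complex.exp (-(2 * Real.pi * Complex.I * (m : ℂ)) / (Nc : ℂ)) ^ n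
      = if (Nc : ℤ) ∣ m then (Nc : ℂ) else 0 := by
  have hNc' : (Nc : ℂ) ≠ 0 := Nat.cast_ne_zero.mpr hNc.ne'
  set ζ : ℂ := Complex.exp (-(2 * Real.pi * Complex.I * (m : ℂ)) / (Nc : ℂ)) with hζ
  by_cases hd : (Nc : ℤ) ∣ m
  · have hζ1 : ζ = 1 := by
      obtain ⟨j, hj⟩ := hd
      rw [hζ, Complex.exp_eq_one_iff]
      refine ⟨-j, ?_⟩
      have : (m : ℂ) = (Nc : ℂ) * (j : ℂ) := by exact_mod_cast congrArg (Int.cast : ℤ → ℂ) hj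
      rw [this]
      field_simp
      push_cast; ring
    rw [if_pos hd]
    simp [hζ1, Nat.card_Icc]
  · have h2 : (2 * (Real.pi : ℂ) * Complex.I) ≠ 0 :=
      mul_ne_zero (mul_ne_zero two_ne_zero (Complex.ofReal_ne_zero.mpr Real.pi_ne_zero))
        Complex.I_ne_zero
    have hζ1 : ζ ≠ 1 := by
      intro h
      rw [hζ, Complex.exp_eq_one_iff] at h
      obtain ⟨n, hn⟩ := h
      have hmc : (m : ℂ) = ((-n * Nc : ℤ) : ℂ) := by
        have h3 : (2 * (Real.pi : ℂ) * Complex.I) * (m : ℂ)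
            = (2 * (Real.pi : ℂ) * Complex.I) * ((-n * Nc : ℤ) : ℂ) := by
          push_cast
          field_simp at hn
          linear_combination (-(2 * (Real.pi : ℂ) * Complex.I)) * hn
        exact mul_left_cancel₀ h2 h3
      have : m = -n * Nc := by exact_mod_cast hmc
      exact hd ⟨-n, by linarith⟩
    have hζNc : ζ ^ Nc = 1 := by
      rw [hζ, ← Complex.exp_nat_mul]
      have : (Nc : ℂ) * (-(2 * Real.pi * Complex.I * (m : ℂ)) / (Nc : ℂ))
          = (-m : ℤ) * (2 * Real.pi * Complex.I) := by
        push_cast; field_simp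
      rw [this, Complex.exp_int_mul_two_pi_mul_I]
    rw [← Finset.Ico_add_one_right_eq_Icc, Finset.sum_Ico_eq_sum_range]
    simp only [Nat.add_sub_cancel]
    have : ∑ i ∈ Finset.range Nc, ζ ^ (1 + i) = ζ * ∑ i ∈ Finset.range Nc, ζ ^ i := by
      rw [Finset.mul_sum]
      exact Finset.sum_congr rfl fun i _ => by rw [pow_add, pow_one]
    rw [this, geom_sum_eq hζ1, hζNc, if_neg hd]
    simp

private lemma parseval (K Nc : ℕ) (hNc : 0 < Nc) (τ : Fin K → ℤ)
    (hτ : ∀ a b : Fin K, a ≠ b → ¬ ((Nc : ℤ) ∣ (τ a - τ b)))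
    (gbar : Fin K → ℂ) :
    ∑ n ∈ Finset.Icc 1 Nc, ‖∑ k : Fin K,
        gbar k * Complex.exp (-(2 * Real.pi * Complex.I * (τ k : ℂ) * (n : ℂ)) / (Nc : ℂ))‖ ^ 2
      = (Nc : ℝ) * ∑ k : Fin K, ‖gbar k‖ ^ 2 := by
  have hNc' : (Nc : ℂ) ≠ 0 := Nat.cast_ne_zero.mpr hNc.ne'
  have habs : ∀ z : ℂ, ((‖z‖ ^ 2 : ℝ) : ℂ) = z * (starRingEnd ℂ) z := by
    intro z
    rw [Complex.sq_norm]
    exact (Complex.mul_conj z).symm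
  apply Complex.ofReal_injective
  push_cast [habs]
  calc ∑ n ∈ Finset.Icc 1 Nc,
        (∑ k : Fin K, gbar k * Complex.exp (-(2 * Real.pi * Complex.I * (τ k : ℂ) * (n : ℂ)) / (Nc : ℂ)))
        * (starRingEnd ℂ) (∑ k : Fin K, gbar k * Complex.exp (-(2 * Real.pi * Complex.I * (τ k : ℂ) * (n : ℂ)) / (Nc : ℂ)))
      = ∑ n ∈ Finset.Icc 1 Nc, ∑ k : Fin K, ∑ l : Fin K,
          (gbar k * (starRingEnd ℂ) (gbar l)) *
            Complex.exp (-(2 * Real.pi * Complex.I * ((τ k - τ l : ℤ) : ℂ)) / (Nc : ℂ)) ^ n := by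
        refine Finset.sum_congr rfl fun n _ => ?_
        rw [map_sum, Finset.sum_mul_sum]
        refine Finset.sum_congr rfl fun k _ => Finset.sum_congr rfl fun l _ => ?_
        rw [map_mul, ← Complex.exp_conj, ← Complex.exp_nat_mul]
        have hc : (starRingEnd ℂ) (-(2 * Real.pi * Complex.I * (τ l : ℂ) * (n : ℂ)) / (Nc : ℂ))
            = (2 * Real.pi * Complex.I * (τ l : ℂ) * (n : ℂ)) / (Nc : ℂ) := by
          simp [map_div₀, Complex.conj_I, map_ofNat]
        rw [hc, mul_mul_mul_comm, ← Complex.exp_add]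
        congr 1
        push_cast
        ring
    _ = ∑ k : Fin K, ∑ l : Fin K, (gbar k * (starRingEnd ℂ) (gbar l)) *
          ∑ n ∈ Finset.Icc 1 Nc,
            Complex.exp (-(2 * Real.pi * Complex.I * ((τ k - τ l : ℤ) : ℂ)) / (Nc : ℂ)) ^ n := by
        rw [Finset.sum_comm]
        refine Finset.sum_congr rfl fun k _ => ?_
        rw [Finset.sum_comm]
        exact Finset.sum_congr rfl fun l _ => (Finset.mul_sum _ _ _).symm
    _ = ∑ k : Fin K, (gbar k * (starRingEnd ℂ) (gbar k)) * (Nc : ℂ) := by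
        refine Finset.sum_congr rfl fun k _ => ?_
        rw [Finset.sum_eq_single k]
        · rw [char_sum Nc hNc, if_pos (by simp)]
        · intro l _ hlk
          rw [char_sum Nc hNc, if_neg (hτ k l (Ne.symm hlk)), mul_zero]
        · intro h; exact absurd (Finset.mem_univ k) h
    _ = (Nc : ℂ) * ∑ k : Fin K, gbar k * (starRingEnd ℂ) (gbar k) := by
        rw [Finset.mul_sum]
        exact Finset.sum_congr rfl fun k _ => mul_comm _ _

/-- The IeCRS second-phase rate with signals arriving in different taps is upper
bounded by the single-tap benchmark rate. -/
theorem stmt_6 (K Nc : ℕ) (hNc : 0 < Nc) (τ : Fin K → ℤ)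
    (hτ : ∀ a b : Fin K, a ≠ b → ¬ ((Nc : ℤ) ∣ (τ a - τ b)))
    (g : Fin K → ℂ) (P : Fin K → ℝ) (hP : ∀ k, 0 ≤ P k)
    (gbar : Fin K → ℂ)
    (hfeas : ∀ k, ‖gbar k‖ ^ 2 ≤ ‖g k‖ ^ 2 * P k) :
    (1 / (Nc : ℝ)) * ∑ n ∈ Finset.Icc 1 Nc,
        Real.logb 2 (1 + ‖∑ k : Fin K,
          gbar k * Complex.exp (-(2 * Real.pi * Complex.I * (τ k : ℂ) * (n : ℂ)) / (Nc : ℂ))‖ ^ 2)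
      ≤ Real.logb 2 (1 + ∑ k : Fin K, ‖g k‖ ^ 2 * P k) := by
  have hNcR : (0:ℝ) < (Nc : ℝ) := by exact_mod_cast hNc
  set x : ℕ → ℝ := fun n => ‖∑ k : Fin K,
      gbar k * Complex.exp (-(2 * Real.pi * Complex.I * (τ k : ℂ) * (n : ℂ)) / (Nc : ℂ))‖ ^ 2
    with hxdef
  have hx : ∀ n, 0 ≤ x n := fun n => by positivity
  have hw : ∑ _n ∈ Finset.Icc 1 Nc, (1 / (Nc : ℝ)) = 1 := by
    rw [Finset.sum_const, Nat.card_Icc, Nat.add_sub_cancel, nsmul_eq_mul]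
    field_simp
  have hj := concaveF.le_map_sum (t := Finset.Icc 1 Nc) (w := fun _ => 1 / (Nc : ℝ)) (p := x)
    (fun _ _ => by positivity) hw (fun n _ => hx n)
  simp only [smul_eq_mul] at hj
  have hsum : ∑ n ∈ Finset.Icc 1 Nc, (1 / (Nc : ℝ)) * x n
      = ∑ k : Fin K, ‖gbar k‖ ^ 2 := by
    rw [← Finset.mul_sum, hxdef, parseval K Nc hNc τ hτ gbar]
    field_simp
  rw [hsum] at hj
  calc (1 / (Nc : ℝ)) * ∑ n ∈ Finset.Icc 1 Nc, Real.logb 2 (1 + x n)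
      = ∑ n ∈ Finset.Icc 1 Nc, (1 / (Nc : ℝ)) * Real.logb 2 (1 + x n) := Finset.mul_sum _ _ _
    _ ≤ Real.logb 2 (1 + ∑ k : Fin K, ‖gbar k‖ ^ 2) := hj
    _ ≤ Real.logb 2 (1 + ∑ k : Fin K, ‖g k‖ ^ 2 * P k) := by
        have hle : ∑ k : Fin K, ‖gbar k‖ ^ 2 ≤ ∑ k : Fin K, ‖g k‖ ^ 2 * P k :=
          Finset.sum_le_sum fun k _ => hfeas k
        have hpos : (0:ℝ) < 1 + ∑ k : Fin K, ‖gbar k‖ ^ 2 := by positivity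
        exact Real.logb_le_logb_of_le (by norm_num) hpos (by linarith)
end

section
/- Let T be a positive real number and c ∈ ℂ with |c|² < T. Then the infimum over w ∈ ℂ and μ > 0 of ξ(w, μ) = μ (|w|² T − 2 Re(w c) + 1) − ln(μ) equals 1 + ln((T − |c|²)/T) = 1 − ln(2) · log₂( T/(T − |c|²) ), and it is attained at w = conj(c)/T and μ = T/(T − |c|²). -/
/-- Rate–WMMSE relationship: the infimum over `w ∈ ℂ`, `μ > 0` of
`ξ(w,μ) = μ(|w|²T − 2Re(wc) + 1) − ln μ` equals
`1 + ln((T − |c|²)/T) = 1 − ln 2 · log₂(T/(T − |c|²))`, attained at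
`w = conj(c)/T`, `μ = T/(T − |c|²)`. -/
theorem stmt_10 (T : ℝ) (hT : 0 < T) (c : ℂ) (hc : ‖c‖ ^ 2 < T)
    (ξ : ℂ → ℝ → ℝ)
    (hξ : ∀ (w : ℂ) (μ : ℝ),
      ξ w μ = μ * (‖w‖ ^ 2 * T - 2 * (w * c).re + 1) - Real.log μ) :
    (∀ (w : ℂ) (μ : ℝ), 0 < μ →
        1 + Real.log ((T - ‖c‖ ^ 2) / T) ≤ ξ w μ) ∧
    ξ ((starRingEnd ℂ) c / (T : ℂ)) (T / (T - ‖c‖ ^ 2))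
        = 1 + Real.log ((T - ‖c‖ ^ 2) / T) ∧
    1 + Real.log ((T - ‖c‖ ^ 2) / T)
        = 1 - Real.log 2 * Real.logb 2 (T / (T - ‖c‖ ^ 2)) := by
  set d : ℝ := T - ‖c‖ ^ 2 with hd
  have hcsq : ‖c‖ ^ 2 = c.re ^ 2 + c.im ^ 2 := by
    rw [Complex.sq_norm, Complex.normSq_apply]; ring
  have hdpos : 0 < d := by simp [hd]; linarith
  have hTne : T ≠ 0 := ne_of_gt hT
  have hdT : 0 < d / T := div_pos hdpos hT
  refine ⟨?_, ?_, ?_⟩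
  · intro w μ hμ
    -- ε(w) ≥ d/T
    have heps : d / T ≤ ‖w‖ ^ 2 * T - 2 * (w * c).re + 1 := by
      rw [div_le_iff₀ hT]
      have habs : ‖w‖ ^ 2 = w.re ^ 2 + w.im ^ 2 := by
        rw [Complex.sq_norm, Complex.normSq_apply]; ring
      have hre : (w * c).re = w.re * c.re - w.im * c.im := by
        simp [Complex.mul_re]
      rw [habs, hre, hd, hcsq]
      nlinarith [sq_nonneg (T * w.re - c.re), sq_nonneg (T * w.im + c.im), sq_nonneg T]
    have hepspos : 0 < ‖w‖ ^ 2 * T - 2 * (w * c).re + 1 :=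
      lt_of_lt_of_le hdT heps
    set e := ‖w‖ ^ 2 * T - 2 * (w * c).re + 1 with he
    have key : 1 + Real.log e ≤ μ * e - Real.log μ := by
      have h1 : Real.log (μ * e) ≤ μ * e - 1 :=
        Real.log_le_sub_one_of_pos (mul_pos hμ hepspos)
      rw [Real.log_mul (ne_of_gt hμ) (ne_of_gt hepspos)] at h1
      linarith
    have hmono : Real.log (d / T) ≤ Real.log e :=
      Real.log_le_log hdT heps
    rw [hξ, ← he]; clear_value e d; linarith
  · rw [hξ]
    have h1 : ‖(starRingEnd ℂ) c / (T : ℂ)‖ ^ 2 = ‖c‖ ^ 2 / T ^ 2 := by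
      rw [norm_div, Complex.norm_conj, Complex.norm_real, Real.norm_eq_abs, abs_of_pos hT, div_pow]
    have h2 : ((starRingEnd ℂ) c / (T : ℂ) * c).re = ‖c‖ ^ 2 / T := by
      rw [div_mul_eq_mul_div, Complex.div_re]
      simp [Complex.normSq_apply, Complex.mul_re, Complex.mul_im, hcsq]
      field_simp
    rw [h1, h2]
    have he : ‖c‖ ^ 2 / T ^ 2 * T - 2 * (‖c‖ ^ 2 / T) + 1 = d / T := by
      field_simp; ring
    rw [he]
    have : T / d * (d / T) = 1 := by field_simp
    rw [this, Real.log_div hTne (ne_of_gt hdpos), Real.log_div (ne_of_gt hdpos) hTne]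
    ring
  · rw [Real.logb, Real.log_div hTne (ne_of_gt hdpos), Real.log_div (ne_of_gt hdpos) hTne]
    have : Real.log 2 ≠ 0 := Real.log_ne_zero_of_pos_of_ne_one two_pos (by norm_num)
    field_simp
    ring
end

section
/- Let N be an odd positive integer and u an integer with gcd(u, N) = 1. Define the Zadoff–Chu sequence x : ℤ → ℂ by x[n] = exp(−iπ u n(n+1)/N). Then x is N-periodic, |x[n]| = 1 for all n, and for every integer m with m ≢ 0 (mod N) the periodic autocorrelation vanishes: Σ_{n=0}^{N−1} x[n] · conj(x[n+m]) = 0. -/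
open Complex Real Finset

/-- Perfect periodic autocorrelation of Zadoff–Chu sequences: for odd `N` and
`gcd(u, N) = 1`, the sequence `x[n] = exp(−iπ u n(n+1)/N)` is `N`-periodic, has
unit modulus, and `∑_{n=0}^{N−1} x[n] conj(x[n+m]) = 0` whenever `N ∤ m`. -/
theorem stmt_15 (N : ℕ) (hN : 0 < N) (hodd : Odd N) (u : ℤ) (hu : Int.gcd u (N : ℤ) = 1)
    (x : ℤ → ℂ)
    (hx : ∀ n : ℤ, x n =
      Complex.exp (-(Real.pi * Complex.I * (u : ℂ) * (n : ℂ) * ((n : ℂ) + 1)) / (N : ℂ))) :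
    (∀ n : ℤ, x (n + N) = x n) ∧
    (∀ n : ℤ, ‖x n‖ = 1) ∧
    (∀ m : ℤ, ¬ ((N : ℤ) ∣ m) →
      ∑ n ∈ Finset.range N, x (n : ℤ) * (starRingEnd ℂ) (x ((n : ℤ) + m)) = 0) := by
  have hNc : (N : ℂ) ≠ 0 := Nat.cast_ne_zero.mpr hN.ne'
  obtain ⟨k, hk⟩ := hodd
  refine ⟨?_, ?_, ?_⟩
  · intro n
    rw [hx, hx]
    have key : (-((Real.pi:ℂ) * Complex.I * (u : ℂ) * ((n + N : ℤ) : ℂ) * (((n + N : ℤ) : ℂ) + 1)) / (N : ℂ))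
        = (-((Real.pi:ℂ) * Complex.I * (u : ℂ) * (n : ℂ) * ((n : ℂ) + 1)) / (N : ℂ))
          + ((-(u * (n + k + 1)) : ℤ) : ℂ) * (2 * Real.pi * Complex.I) := by
      have hkc : (N : ℂ) = 2 * (k:ℂ) + 1 := by exact_mod_cast congrArg (Nat.cast : ℕ → ℂ) hk
      push_cast
      rw [hkc] at hNc ⊢
      field_simp
      ring
    rw [key, Complex.exp_add, Complex.exp_int_mul_two_pi_mul_I, mul_one]
  · intro n
    rw [hx]
    have : (-((Real.pi:ℂ) * Complex.I * (u : ℂ) * (n : ℂ) * ((n : ℂ) + 1)) / (N : ℂ))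
        = ((-(Real.pi * u * n * (n+1)) / N : ℝ) : ℂ) * Complex.I := by
      push_cast; ring
    rw [this, Complex.norm_exp_ofReal_mul_I]
  · intro m hm
    set z : ℂ := 2 * Real.pi * Complex.I * ((u * m : ℤ) : ℂ) / (N : ℂ) with hz
    set ζ : ℂ := Complex.exp z with hζ
    have hζ1 : ζ ≠ 1 := by
      intro h
      rw [hζ, Complex.exp_eq_one_iff] at h
      obtain ⟨j, hj⟩ := h
      rw [hz] at hj
      have hπ : (Real.pi : ℂ) ≠ 0 := by exact_mod_cast Real.pi_ne_zero
      have : ((u * m : ℤ) : ℂ) = (j : ℂ) * (N : ℂ) := by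
        field_simp at hj
        have h2 : (2 * (Real.pi:ℂ) * Complex.I) * ((u * m : ℤ) : ℂ)
            = (2 * (Real.pi:ℂ) * Complex.I) * ((j:ℂ) * (N:ℂ)) := by
          push_cast
          push_cast at hj
          linear_combination (2 * (Real.pi:ℂ) * Complex.I) * hj
        exact mul_left_cancel₀ (mul_ne_zero (mul_ne_zero two_ne_zero hπ) Complex.I_ne_zero) h2
      have hdvd : (N : ℤ) ∣ u * m := by
        have : (u * m : ℤ) = j * N := by exact_mod_cast this
        exact ⟨j, by linarith [this]⟩
      have hcop : IsCoprime (u : ℤ) (N : ℤ) := Int.isCoprime_iff_gcd_eq_one.mpr hu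
      exact hm (hcop.symm.dvd_of_dvd_mul_left hdvd)
    have hζN : ζ ^ N = 1 := by
      rw [hζ, ← Complex.exp_nat_mul, hz]
      have : (N : ℂ) * (2 * Real.pi * Complex.I * ((u * m : ℤ) : ℂ) / (N : ℂ))
          = ((u * m : ℤ) : ℂ) * (2 * Real.pi * Complex.I) := by
        field_simp
      rw [this, Complex.exp_int_mul_two_pi_mul_I]
    set c : ℂ := Complex.exp ((Real.pi:ℂ) * Complex.I * (u : ℂ) * (m : ℂ) * ((m : ℂ) + 1) / (N : ℂ)) with hc
    have hterm : ∀ n ∈ Finset.range N,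
        x (n : ℤ) * (starRingEnd ℂ) (x ((n : ℤ) + m)) = c * ζ ^ (n : ℕ) := by
      intro n _
      rw [hx, hx, ← Complex.exp_conj]
      have hconj : (starRingEnd ℂ) (-((Real.pi:ℂ) * Complex.I * (u : ℂ) * (((n:ℤ) + m : ℤ) : ℂ) * ((((n:ℤ) + m : ℤ) : ℂ) + 1)) / (N : ℂ))
          = ((Real.pi:ℂ) * Complex.I * (u : ℂ) * (((n:ℤ) + m : ℤ) : ℂ) * ((((n:ℤ) + m : ℤ) : ℂ) + 1)) / (N : ℂ) := by
        simp [map_div₀, Complex.conj_I]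
      rw [hconj, ← Complex.exp_add, hc, hζ, ← Complex.exp_nat_mul, ← Complex.exp_add, hz]
      congr 1
      push_cast
      field_simp
      ring
    rw [Finset.sum_congr rfl hterm, ← Finset.mul_sum, geom_sum_eq hζ1, hζN]
    simp
end
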